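/- arXiv:1807.04735 — 2 statements merged into one kernel-verified Lean document; each statement's English description precedes it below -/
import Mathlib

section
/- Let (x_i)_{i≥1} be a 0-1 sequence and p = ∑_{i≥1} (x_i·2^(-(3i-2)) + 2^(-3i)). For every k ≥ 1 and every real t with |t - p·2^(6k)| ≤ 2^(3k), we have ⌊t / 2^(3k+2)⌋ mod 2 = x_k. -/
theorem stmt_9 (x : ℕ → ℕ) (hx : ∀ i, x i ≤ 1) (p : ℝ)
    (hp : p = ∑' i : ℕ, ((x (i + 1) : ℝ) * 2 ^ (-(3 * (i : ℤ) + 1))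
      + 2 ^ (-(3 * (i : ℤ) + 3))))
    (k : ℕ) (hk : 1 ≤ k) (t : ℝ)
    (ht : |t - p * 2 ^ (6 * k)| ≤ 2 ^ (3 * k)) :
    ⌊t / 2 ^ (3 * k + 2)⌋ % 2 = x k := by
  set f : ℕ → ℝ := fun i => (x (i + 1) : ℝ) * 2 ^ (-(3 * (i : ℤ) + 1))
      + 2 ^ (-(3 * (i : ℤ) + 3)) with hfdef
  have hzp : ∀ (z : ℤ) (n c : ℕ), z + (n:ℤ) = (c:ℤ) → (2:ℝ)^z * 2^n = 2^c := by
    intro z n c h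
    rw [← zpow_natCast (2:ℝ) n, ← zpow_add₀ (by norm_num : (2:ℝ) ≠ 0), h, zpow_natCast]
  have e1 : ∀ i : ℕ, ((2:ℝ) ^ (-(3 * (i:ℤ) + 1))) = (1/2) * (1/8:ℝ)^i := by
    intro i
    rw [show -(3*(i:ℤ)+1) = (-1) + (-3)*(i:ℤ) by ring, zpow_add₀ (by norm_num : (2:ℝ) ≠ 0),
      zpow_mul, zpow_natCast]
    norm_num
  have e3 : ∀ i : ℕ, ((2:ℝ) ^ (-(3 * (i:ℤ) + 3))) = (1/8) * (1/8:ℝ)^i := by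
    intro i
    rw [show -(3*(i:ℤ)+3) = (-3) + (-3)*(i:ℤ) by ring, zpow_add₀ (by norm_num : (2:ℝ) ≠ 0),
      zpow_mul, zpow_natCast]
    norm_num
  have hfnn : ∀ i, 0 ≤ f i := by
    intro i
    simp only [hfdef]
    positivity
  have hfle : ∀ i, f i ≤ (5/8) * (1/8:ℝ)^i := by
    intro i
    simp only [hfdef, e1 i, e3 i]
    have hx1 : (x (i+1) : ℝ) ≤ 1 := by exact_mod_cast hx (i+1)
    have h8 : (0:ℝ) ≤ (1/8:ℝ)^i := by positivity
    nlinarith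
  have hg : Summable (fun i : ℕ => (5/8) * (1/8:ℝ)^i) :=
    (summable_geometric_of_lt_one (by norm_num) (by norm_num)).mul_left _
  have hsum : Summable f := Summable.of_nonneg_of_le hfnn hfle hg
  have hsplit : p = (∑ i ∈ Finset.range k, f i) + ∑' i, f (i + k) := by
    rw [hp]; exact (Summable.sum_add_tsum_nat_add k hsum).symm
  set r : ℝ := (∑' i, f (i + k)) * 2 ^ (6 * k) with hrdef
  have hrnn : 0 ≤ r := by
    apply mul_nonneg _ (by positivity)
    exact tsum_nonneg fun i => hfnn _
  have htail : (∑' i, f (i + k)) ≤ (5/7) * (1/8:ℝ)^k := by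
    have h1 : (∑' i, f (i + k)) ≤ ∑' i : ℕ, (5/8) * (1/8:ℝ)^(i+k) := by
      apply Summable.tsum_le_tsum (fun i => hfle (i + k)) (hsum.comp_injective (add_left_injective k))
      exact (hg.comp_injective (add_left_injective k))
    have h2 : (∑' i : ℕ, (5/8) * (1/8:ℝ)^(i+k)) = (5/7) * (1/8:ℝ)^k := by
      have e : ∀ i : ℕ, (5/8) * (1/8:ℝ)^(i+k) = ((5/8) * (1/8:ℝ)^k) * (1/8:ℝ)^i := by
        intro i; rw [pow_add]; ring
      rw [tsum_congr e, tsum_mul_left, tsum_geometric_of_lt_one (by norm_num) (by norm_num)]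
      ring
    linarith
  have h8k : (1/8:ℝ)^k * 2 ^ (6*k) = 2 ^ (3*k) := by
    have h2 : (2:ℝ)^(6*k) = 8^k * 2^(3*k) := by
      rw [show (8:ℝ) = 2^3 by norm_num, ← pow_mul, ← pow_add]
      congr 1; ring
    rw [h2, ← mul_assoc, one_div, inv_pow, inv_mul_cancel₀ (by positivity), one_mul]
  have hrle : r ≤ (5/7) * 2 ^ (3*k) := by
    rw [hrdef]
    calc (∑' i, f (i + k)) * 2 ^ (6 * k) ≤ ((5/7) * (1/8:ℝ)^k) * 2 ^ (6*k) := by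
          apply mul_le_mul_of_nonneg_right htail (by positivity)
      _ = (5/7) * 2 ^ (3*k) := by rw [mul_assoc, h8k]
  obtain ⟨m, hm⟩ : ∃ m, k = m + 1 := ⟨k - 1, (Nat.succ_pred_eq_of_pos hk).symm⟩
  have hfront : (∑ i ∈ Finset.range k, f i) = (∑ i ∈ Finset.range m, f i) + f m := by
    rw [hm, Finset.sum_range_succ]
  have hfm : f m * 2 ^ (6*k) = (x k : ℝ) * 2 ^ (3*k+2) + 2 ^ (3*k) := by
    simp only [hfdef, hm]
    rw [add_mul, mul_assoc, hzp _ _ (3*(m+1)+2) (by push_cast; ring),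
      hzp _ _ (3*(m+1)) (by push_cast; ring)]
  set A : ℤ := ∑ i ∈ Finset.range m, ((x (i+1) : ℤ) * 2^(3*k-3*i-4) + 2^(3*k-3*i-6)) with hAdef
  have hhead : (∑ i ∈ Finset.range m, f i) * 2 ^ (6*k) = (A : ℝ) * 2^(3*k+3) := by
    rw [hAdef, Finset.sum_mul]
    push_cast
    rw [Finset.sum_mul]
    apply Finset.sum_congr rfl
    intro i hi
    rw [Finset.mem_range] at hi
    obtain ⟨j, hj⟩ : ∃ j, k = i + j + 2 := ⟨m - i - 1, by omega⟩
    have ha : 3*k-3*i-4 = 3*j+2 := by omega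
    have hb : 3*k-3*i-6 = 3*j := by omega
    rw [ha, hb]
    calc f i * 2^(6*k) = (x (i+1):ℝ) * 2^(3*j+2+(3*k+3)) + 2^(3*j+(3*k+3)) := by
          simp only [hfdef]
          rw [add_mul, mul_assoc, hzp _ _ (3*j+2+(3*k+3)) (by push_cast; omega),
            hzp _ _ (3*j+(3*k+3)) (by push_cast; omega)]
      _ = ((x (i+1):ℝ) * 2^(3*j+2) + 2^(3*j)) * 2^(3*k+3) := by
          rw [add_mul, mul_assoc, ← pow_add, ← pow_add]
  have hkey : p * 2^(6*k) = (A:ℝ)*2^(3*k+3) + (x k : ℝ)*2^(3*k+2) + 2^(3*k) + r := by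
    rw [hsplit, hfront, add_mul, add_mul, hhead, hfm, hrdef]
    ring
  have h23 : (2:ℝ)^(3*k+3) = 2*2^(3*k+2) := by
    rw [show 3*k+3 = (3*k+2)+1 by omega, pow_succ]; ring
  have h4 : (2:ℝ)^(3*k+2) = 4*2^(3*k) := by
    rw [pow_add]; ring
  have hbase : (A:ℝ)*2^(3*k+3) + (x k : ℝ)*2^(3*k+2) = (2*(A:ℝ) + (x k:ℝ)) * 2^(3*k+2) := by
    rw [h23]; ring
  have habs := abs_le.mp ht
  have hpow : (0:ℝ) < 2^(3*k+2) := by positivity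
  have h1 : (2*(A:ℝ) + (x k:ℝ)) * 2^(3*k+2) ≤ t := by
    nlinarith [habs.1, hkey, hbase, hrnn]
  have h2 : t < (2*(A:ℝ) + (x k:ℝ) + 1) * 2^(3*k+2) := by
    nlinarith [habs.2, hkey, hbase, hrle, h4]
  have hfl : ⌊t / 2^(3*k+2)⌋ = 2*A + (x k : ℤ) := by
    rw [Int.floor_eq_iff]
    constructor
    · rw [le_div_iff₀ hpow]; push_cast; linarith
    · rw [div_lt_iff₀ hpow]; push_cast; linarith
  rw [hfl]
  have := hx k
  omega
end

section
/- Let (x_i)_{i≥1} be a 0-1 sequence, p = ∑_{i≥1} (x_i·2^(-(3i-2)) + 2^(-3i)), and let k ≥ 1. If H is a binomial random variable with 64^k trials and success probability p, then Pr[ ⌊H / 2^(3k+2)⌋ mod 2 = x_k ] ≥ 3/4. -/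
open MeasureTheory Finset
open scoped ENNReal


lemma mom0 (p q : ℝ) (n : ℕ) :
    ∑ h ∈ range (n+1), (n.choose h : ℝ) * p^h * q^(n-h) = (p+q)^n := by
  rw [add_pow]
  exact Finset.sum_congr rfl fun h _ => by ring

lemma keycast (m h : ℕ) : ((h:ℝ)+1) * ((m+1).choose (h+1) : ℝ) = ((m:ℝ)+1) * (m.choose h : ℝ) := by
  have h1 : (m+1) * m.choose h = (m+1).choose (h+1) * (h+1) := Nat.add_one_mul_choose_eq m h
  have h2 := congrArg (Nat.cast (R := ℝ)) h1
  push_cast at h2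
  linarith

lemma mom1 (p q : ℝ) (n : ℕ) :
    ∑ h ∈ range (n+1), (h : ℝ) * (n.choose h : ℝ) * p^h * q^(n-h)
      = n * p * (p+q)^(n-1) := by
  cases n with
  | zero => simp
  | succ m =>
    rw [Finset.sum_range_succ']
    simp only [Nat.succ_sub_succ]
    have step : ∀ h ∈ range (m+1),
        ((h+1 : ℕ) : ℝ) * (((m+1).choose (h+1) : ℕ) : ℝ) * p^(h+1) * q^(m-h)
          = (((m:ℝ)+1) * p) * ((m.choose h : ℝ) * p^h * q^(m-h)) := by
      intro h _
      push_cast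
      linear_combination (p^(h+1)*q^(m-h)) * keycast m h
    rw [Finset.sum_congr rfl step, ← Finset.mul_sum, mom0]
    push_cast
    simp only [Nat.sub_zero]
    ring

lemma mom2 (p q : ℝ) (n : ℕ) :
    ∑ h ∈ range (n+1), (h : ℝ) * ((h:ℝ) - 1) * (n.choose h : ℝ) * p^h * q^(n-h)
      = n * ((n:ℝ)-1) * p^2 * (p+q)^(n-2) := by
  match n with
  | 0 => simp
  | 1 => norm_num [Finset.sum_range_succ]
  | (m+2) =>
    rw [Finset.sum_range_succ', Finset.sum_range_succ']
    simp only [Nat.succ_sub_succ, Nat.sub_zero]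
    have step : ∀ h ∈ range (m+1),
        ((h+1+1 : ℕ) : ℝ) * (((h+1+1:ℕ):ℝ) - 1) * (((m+2).choose (h+1+1) : ℕ) : ℝ) * p^(h+1+1) * q^(m-h)
          = (((m:ℝ)+2) * ((m:ℝ)+1) * p^2) * ((m.choose h : ℝ) * p^h * q^(m-h)) := by
      intro h _
      have k1 := keycast (m+1) (h+1)
      have k2 := keycast m h
      push_cast at k1 k2 ⊢
      linear_combination (p^(h+1+1)*q^(m-h)) * (((h:ℝ)+1)*k1 + ((m:ℝ)+2)*k2)
    rw [Finset.sum_congr rfl step, ← Finset.mul_sum, mom0]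
    push_cast
    ring

lemma momvar (p q : ℝ) (hpq : p + q = 1) (n : ℕ) :
    ∑ h ∈ range (n+1), ((h : ℝ) - n*p)^2 * (n.choose h : ℝ) * p^h * q^(n-h)
      = n * p * q := by
  have e : ∀ h ∈ range (n+1),
      ((h : ℝ) - n*p)^2 * (n.choose h : ℝ) * p^h * q^(n-h)
        = (h : ℝ) * ((h:ℝ) - 1) * (n.choose h : ℝ) * p^h * q^(n-h)
          + (1 - 2*(n:ℝ)*p) * ((h : ℝ) * (n.choose h : ℝ) * p^h * q^(n-h))
          + ((n:ℝ)*p)^2 * ((n.choose h : ℝ) * p^h * q^(n-h)) := by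
    intro h _; ring
  rw [Finset.sum_congr rfl e]
  rw [Finset.sum_add_distrib, Finset.sum_add_distrib, ← Finset.mul_sum, ← Finset.mul_sum,
    mom0, mom1, mom2, hpq]
  simp only [one_pow, mul_one]
  have hq : q = 1 - p := by linarith
  cases n with
  | zero => simp
  | succ m => push_cast; rw [hq]; ring


lemma cheb (p : ℝ) (hp0 : 0 ≤ p) (hp1 : p ≤ 1) (k : ℕ)
    (P : ℕ → Prop) [DecidablePred P]
    (hP : ∀ h : ℕ, h ≤ 64^k → |(h:ℝ) - (64^k : ℕ)*p| < 2^(3*k) → P h) :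
    ∑ h ∈ (range (64^k+1)).filter (fun h => ¬ P h),
      ((64^k : ℕ).choose h : ℝ) * p^h * (1-p)^(64^k-h) ≤ 1/4 := by
  set n : ℕ := 64^k with hn
  have hq0 : (0:ℝ) ≤ 1 - p := by linarith
  have h64 : ((2:ℝ)^(3*k))^2 = (n:ℝ) := by
    rw [hn, ← pow_mul]; push_cast
    rw [show 3*k*2 = 6*k by ring, pow_mul]; norm_num
  have hnpos : (0:ℝ) < (n:ℝ) := by positivity
  have term_nonneg : ∀ h, 0 ≤ ((n:ℕ).choose h : ℝ) * p^h * (1-p)^(n-h) := by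
    intro h; positivity
  have step1 : ∀ h ∈ (range (n+1)).filter (fun h => ¬ P h),
      ((n:ℕ).choose h : ℝ) * p^h * (1-p)^(n-h)
        ≤ (((h:ℝ) - n*p)^2 / n) * (((n:ℕ).choose h : ℝ) * p^h * (1-p)^(n-h)) := by
    intro h hh
    rw [Finset.mem_filter, Finset.mem_range] at hh
    obtain ⟨hhn, hnotP⟩ := hh
    have habs : (2:ℝ)^(3*k) ≤ |(h:ℝ) - n*p| := by
      by_contra hc
      exact hnotP (hP h (Nat.lt_succ_iff.mp hhn) (by push_cast at hc ⊢; linarith))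
    have hsq : (n:ℝ) ≤ ((h:ℝ) - n*p)^2 := by
      calc (n:ℝ) = ((2:ℝ)^(3*k))^2 := h64.symm
        _ ≤ |(h:ℝ) - n*p|^2 := by
            apply pow_le_pow_left₀ (by positivity) habs
        _ = ((h:ℝ) - n*p)^2 := sq_abs _
    have h1 : (1:ℝ) ≤ ((h:ℝ) - n*p)^2 / n := (one_le_div hnpos).mpr hsq
    calc ((n:ℕ).choose h : ℝ) * p^h * (1-p)^(n-h)
        = 1 * (((n:ℕ).choose h : ℝ) * p^h * (1-p)^(n-h)) := (one_mul _).symm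
      _ ≤ (((h:ℝ) - n*p)^2 / n) * (((n:ℕ).choose h : ℝ) * p^h * (1-p)^(n-h)) :=
          mul_le_mul_of_nonneg_right h1 (term_nonneg h)
  calc ∑ h ∈ (range (n+1)).filter (fun h => ¬ P h),
        ((n:ℕ).choose h : ℝ) * p^h * (1-p)^(n-h)
      ≤ ∑ h ∈ (range (n+1)).filter (fun h => ¬ P h),
        (((h:ℝ) - n*p)^2 / n) * (((n:ℕ).choose h : ℝ) * p^h * (1-p)^(n-h)) :=
        Finset.sum_le_sum step1
    _ ≤ ∑ h ∈ range (n+1),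
        (((h:ℝ) - n*p)^2 / n) * (((n:ℕ).choose h : ℝ) * p^h * (1-p)^(n-h)) := by
        apply Finset.sum_le_sum_of_subset_of_nonneg (Finset.filter_subset _ _)
        intro h _ _; positivity
    _ = (1/(n:ℝ)) * ∑ h ∈ range (n+1),
        ((h:ℝ) - n*p)^2 * (((n:ℕ).choose h : ℝ)) * p^h * (1-p)^(n-h) := by
        rw [Finset.mul_sum]; exact Finset.sum_congr rfl fun h _ => by ring
    _ = (1/(n:ℝ)) * ((n:ℝ) * p * (1-p)) := by rw [momvar p (1-p) (by ring) n]
    _ = p * (1-p) := by field_simp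
    _ ≤ 1/4 := by nlinarith [sq_nonneg (p - 1/2)]

lemma NT (x : ℕ → ℕ) (hx : ∀ i, x i ≤ 1) (p : ℝ)
    (hp : p = ∑' i : ℕ, ((x (i + 1) : ℝ) * 2 ^ (-(3 * (i : ℤ) + 1))
      + 2 ^ (-(3 * (i : ℤ) + 3)))) (k : ℕ) (hk : 1 ≤ k) :
    ∀ h : ℕ, h ≤ 64^k → |(h:ℝ) - ((64^k : ℕ):ℝ)*p| < 2^(3*k) →
      h / 2^(3*k+2) % 2 = x k := by
  -- rewrite p as a sum of b i with ℕ exponents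
  set b : ℕ → ℝ := fun i => (x (i+1) : ℝ) * ((2:ℝ)^(3*i+1))⁻¹ + ((2:ℝ)^(3*i+3))⁻¹ with hb
  have hpb : p = ∑' i, b i := by
    rw [hp]
    refine tsum_congr fun i => ?_
    have e1 : -(3 * (i : ℤ) + 1) = -((3*i+1 : ℕ) : ℤ) := by push_cast; ring
    have e2 : -(3 * (i : ℤ) + 3) = -((3*i+3 : ℕ) : ℤ) := by push_cast; ring
    rw [e1, e2, zpow_neg, zpow_neg, zpow_natCast, zpow_natCast]
  have hb_nonneg : ∀ i, 0 ≤ b i := by intro i; positivity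
  have hb_le : ∀ i, b i ≤ (1/8:ℝ)^i := by
    intro i
    have hx' : (x (i+1) : ℝ) ≤ 1 := by exact_mod_cast hx (i+1)
    have h8 : (1/8:ℝ)^i = ((2:ℝ)^(3*i))⁻¹ := by
      rw [pow_mul]; norm_num [one_div, ← inv_pow]
    have h1 : ((2:ℝ)^(3*i+1))⁻¹ = (1/8:ℝ)^i * (1/2) := by
      rw [h8, pow_add, mul_inv]; norm_num
    have h2 : ((2:ℝ)^(3*i+3))⁻¹ = (1/8:ℝ)^i * (1/8) := by
      rw [h8, pow_add, mul_inv]; norm_num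
    have hge : (0:ℝ) ≤ (1/8:ℝ)^i := by positivity
    calc b i ≤ 1 * ((2:ℝ)^(3*i+1))⁻¹ + ((2:ℝ)^(3*i+3))⁻¹ := by
          apply add_le_add_left
          apply mul_le_mul_of_nonneg_right hx' (by positivity)
      _ = (1/8:ℝ)^i * (5/8) := by rw [h1, h2]; ring
      _ ≤ (1/8:ℝ)^i := by nlinarith
  have hgeo : Summable (fun i : ℕ => (1/8:ℝ)^i) :=
    summable_geometric_of_lt_one (by norm_num) (by norm_num)
  have hsumb : Summable b := Summable.of_nonneg_of_le hb_nonneg hb_le hgeo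
  -- split into head and tail
  set A : ℕ := ∑ i ∈ range k, (x (i+1) * 2^(3*(k-1-i)+2) + 2^(3*(k-1-i))) with hA
  set t : ℝ := ∑' i, b (i+k) with ht
  have hsplit : (∑ i ∈ range k, b i) + t = p := by
    rw [hpb, ht]; exact Summable.sum_add_tsum_nat_add k hsumb
  have hhead : (∑ i ∈ range k, b i) * 2^(3*k) = (A:ℝ) := by
    rw [Finset.sum_mul, hA]
    push_cast
    refine Finset.sum_congr rfl fun i hi => ?_
    rw [Finset.mem_range] at hi
    have e1 : (3*(k-1-i)+2) + (3*i+1) = 3*k := by omega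
    have e2 : (3*(k-1-i)) + (3*i+3) = 3*k := by omega
    have p1 : (2:ℝ)^(3*k) = 2^(3*(k-1-i)+2) * 2^(3*i+1) := by rw [← pow_add, e1]
    have p2 : (2:ℝ)^(3*k) = 2^(3*(k-1-i)) * 2^(3*i+3) := by rw [← pow_add, e2]
    have h1 : ((2:ℝ)^(3*i+1))⁻¹ * 2^(3*k) = 2^(3*(k-1-i)+2) := by
      rw [p1]; field_simp
    have h2 : ((2:ℝ)^(3*i+3))⁻¹ * 2^(3*k) = 2^(3*(k-1-i)) := by
      rw [p2]; field_simp
    calc b i * 2^(3*k)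
        = (x (i+1) : ℝ) * (((2:ℝ)^(3*i+1))⁻¹ * 2^(3*k)) + ((2:ℝ)^(3*i+3))⁻¹ * 2^(3*k) := by
          rw [hb]; ring
      _ = (x (i+1) : ℝ) * 2^(3*(k-1-i)+2) + 2^(3*(k-1-i)) := by rw [h1, h2]
  -- tail bounds
  have hgeosum : ∑' i : ℕ, (1/8:ℝ)^i = 8/7 := by
    rw [tsum_geometric_of_lt_one (by norm_num) (by norm_num)]; norm_num
  have hshift_le : ∀ i : ℕ, b (i+k) ≤ ((2:ℝ)^(3*k))⁻¹ * (5/8) * (1/8:ℝ)^i := by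
    intro i
    have : (1/8:ℝ)^(i+k) = ((2:ℝ)^(3*k))⁻¹ * (1/8:ℝ)^i := by
      rw [pow_add]
      have : (1/8:ℝ)^k = ((2:ℝ)^(3*k))⁻¹ := by
        rw [pow_mul]; norm_num [one_div, ← inv_pow]
      rw [this]; ring
    calc b (i+k) ≤ (1/8:ℝ)^(i+k) * (5/8) := by
          have hx' : (x (i+k+1) : ℝ) ≤ 1 := by exact_mod_cast hx (i+k+1)
          have h8 : (1/8:ℝ)^(i+k) = ((2:ℝ)^(3*(i+k)))⁻¹ := by
            rw [pow_mul]; norm_num [one_div, ← inv_pow]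
          have h1 : ((2:ℝ)^(3*(i+k)+1))⁻¹ = (1/8:ℝ)^(i+k) * (1/2) := by
            rw [h8, pow_add, mul_inv]; norm_num
          have h2 : ((2:ℝ)^(3*(i+k)+3))⁻¹ = (1/8:ℝ)^(i+k) * (1/8) := by
            rw [h8, pow_add, mul_inv]; norm_num
          have hge : (0:ℝ) ≤ (1/8:ℝ)^(i+k) := by positivity
          calc b (i+k) ≤ 1 * ((2:ℝ)^(3*(i+k)+1))⁻¹ + ((2:ℝ)^(3*(i+k)+3))⁻¹ := by
                apply add_le_add_left
                apply mul_le_mul_of_nonneg_right hx' (by positivity)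
            _ = (1/8:ℝ)^(i+k) * (5/8) := by rw [h1, h2]; ring
      _ = ((2:ℝ)^(3*k))⁻¹ * (5/8) * (1/8:ℝ)^i := by rw [this]; ring
  have hshift_ge : ∀ i : ℕ, ((2:ℝ)^(3*k))⁻¹ * (1/8) * (1/8:ℝ)^i ≤ b (i+k) := by
    intro i
    have h8 : (1/8:ℝ)^(i+k) = ((2:ℝ)^(3*(i+k)))⁻¹ := by
      rw [pow_mul]; norm_num [one_div, ← inv_pow]
    have h2 : ((2:ℝ)^(3*(i+k)+3))⁻¹ = (1/8:ℝ)^(i+k) * (1/8) := by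
      rw [h8, pow_add, mul_inv]; norm_num
    have hk8 : (1/8:ℝ)^k = ((2:ℝ)^(3*k))⁻¹ := by
      rw [pow_mul]; norm_num [one_div, ← inv_pow]
    have : ((2:ℝ)^(3*(i+k)+3))⁻¹ = ((2:ℝ)^(3*k))⁻¹ * (1/8) * (1/8:ℝ)^i := by
      rw [h2, pow_add, hk8]; ring
    have hfirst : (0:ℝ) ≤ (x (i+k+1) : ℝ) * ((2:ℝ)^(3*(i+k)+1))⁻¹ := by positivity
    rw [hb]
    simp only []
    rw [← this] at *
    linarith [hfirst]
  have hub : Summable (fun i : ℕ => ((2:ℝ)^(3*k))⁻¹ * (5/8) * (1/8:ℝ)^i) := hgeo.mul_left _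
  have hlb : Summable (fun i : ℕ => ((2:ℝ)^(3*k))⁻¹ * (1/8) * (1/8:ℝ)^i) := hgeo.mul_left _
  have hshift : Summable (fun i : ℕ => b (i+k)) := by
    exact (summable_nat_add_iff k).mpr hsumb
  have ht_ub : t ≤ (5/7) * ((2:ℝ)^(3*k))⁻¹ := by
    calc t ≤ ∑' i : ℕ, ((2:ℝ)^(3*k))⁻¹ * (5/8) * (1/8:ℝ)^i :=
          Summable.tsum_le_tsum hshift_le hshift hub
      _ = ((2:ℝ)^(3*k))⁻¹ * (5/8) * (8/7) := by rw [tsum_mul_left, hgeosum]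
      _ = (5/7) * ((2:ℝ)^(3*k))⁻¹ := by ring
  have ht_lb : (1/7) * ((2:ℝ)^(3*k))⁻¹ ≤ t := by
    calc (1/7) * ((2:ℝ)^(3*k))⁻¹ = ((2:ℝ)^(3*k))⁻¹ * (1/8) * (8/7) := by ring
      _ = ∑' i : ℕ, ((2:ℝ)^(3*k))⁻¹ * (1/8) * (1/8:ℝ)^i := by rw [tsum_mul_left, hgeosum]
      _ ≤ t := Summable.tsum_le_tsum hshift_ge hlb hshift
  -- A = 8*M + 4*x k + 1
  obtain ⟨M, hM⟩ : ∃ M : ℕ, A = 8*M + (4 * x k + 1) := by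
    obtain ⟨j, hj⟩ : ∃ j, k = j + 1 := ⟨k-1, by omega⟩
    subst hj
    rw [hA, Finset.sum_range_succ]
    have hlast : x (j+1) * 2^(3*(j+1-1-j)+2) + 2^(3*(j+1-1-j)) = 4 * x (j+1) + 1 := by
      have : j+1-1-j = 0 := by omega
      rw [this]; ring
    rw [hlast]
    have hdvd : (8:ℕ) ∣ ∑ i ∈ range j, (x (i+1) * 2^(3*(j+1-1-i)+2) + 2^(3*(j+1-1-i))) := by
      apply Finset.dvd_sum
      intro i hi
      rw [Finset.mem_range] at hi
      have hd : (8:ℕ) ∣ 2^(3*(j+1-1-i)) := by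
        calc (8:ℕ) = 2^3 := by norm_num
          _ ∣ 2^(3*(j+1-1-i)) := pow_dvd_pow 2 (by omega)
      have hd2 : (8:ℕ) ∣ 2^(3*(j+1-1-i)+2) := by
        calc (8:ℕ) = 2^3 := by norm_num
          _ ∣ 2^(3*(j+1-1-i)+2) := pow_dvd_pow 2 (by omega)
      exact dvd_add (hd2.mul_left _) hd
    obtain ⟨M, hM⟩ := hdvd
    exact ⟨M, by omega⟩
  -- final arithmetic
  intro h hle habs
  have h2k_pos : (0:ℝ) < (2:ℝ)^(3*k) := by positivity
  have hmu : ((64^k : ℕ):ℝ) * p = (A:ℝ) * 2^(3*k) + t * 2^(6*k) := by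
    have h64 : ((64^k : ℕ):ℝ) = 2^(6*k) := by
      push_cast
      rw [show (64:ℝ) = 2^6 by norm_num, ← pow_mul]
    have h6k : (2:ℝ)^(6*k) = 2^(3*k) * 2^(3*k) := by
      rw [← pow_add]; congr 1; omega
    rw [h64, ← hsplit]
    have : (∑ i ∈ range k, b i) = (A:ℝ) / 2^(3*k) := by
      rw [← hhead, mul_div_cancel_right₀ _ (by positivity)]
    rw [this, h6k]
    field_simp
  have hR_ub : t * 2^(6*k) ≤ (5/7) * 2^(3*k) := by
    have h6k : (2:ℝ)^(6*k) = 2^(3*k) * 2^(3*k) := by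
      rw [← pow_add]; congr 1; omega
    calc t * 2^(6*k) ≤ ((5/7) * ((2:ℝ)^(3*k))⁻¹) * 2^(6*k) := by
          apply mul_le_mul_of_nonneg_right ht_ub (by positivity)
      _ = (5/7) * 2^(3*k) := by rw [h6k]; field_simp
  have hR_lb : (1/7) * (2:ℝ)^(3*k) ≤ t * 2^(6*k) := by
    have h6k : (2:ℝ)^(6*k) = 2^(3*k) * 2^(3*k) := by
      rw [← pow_add]; congr 1; omega
    calc (1/7) * (2:ℝ)^(3*k) = ((1/7) * ((2:ℝ)^(3*k))⁻¹) * 2^(6*k) := by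
          rw [h6k]; field_simp
      _ ≤ t * 2^(6*k) := by
          apply mul_le_mul_of_nonneg_right ht_lb (by positivity)
  -- bounds on h
  obtain ⟨B, hB⟩ : ∃ B : ℕ, B = (2*M + x k) * 2^(3*k+2) := ⟨_, rfl⟩
  have hAB : (A:ℝ) * 2^(3*k) = (B:ℝ) + 2^(3*k) := by
    rw [hB, hM]
    push_cast
    rw [show (2:ℝ)^(3*k+2) = 2^(3*k) * 4 by rw [pow_add]; norm_num]
    ring
  have habs' : |(h:ℝ) - ((64^k : ℕ):ℝ)*p| < 2^(3*k) := habs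
  rw [abs_lt] at habs'
  have hBlt : (B:ℝ) < (h:ℝ) := by
    rw [hmu, hAB] at habs'
    nlinarith [habs'.1, hR_lb]
  have hBub : (h:ℝ) < (B:ℝ) + 4 * 2^(3*k) := by
    rw [hmu, hAB] at habs'
    nlinarith [habs'.2, hR_ub]
  have hBle : B ≤ h := by
    have : (B:ℝ) < (h:ℝ) := hBlt
    exact_mod_cast this.le
  have hhub : h < B + 2^(3*k+2) := by
    have h4 : ((B + 2^(3*k+2) : ℕ):ℝ) = (B:ℝ) + 4 * 2^(3*k) := by
      push_cast
      rw [show (2:ℝ)^(3*k+2) = 2^(3*k) * 4 by rw [pow_add]; norm_num]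
      ring
    have : (h:ℝ) < ((B + 2^(3*k+2) : ℕ):ℝ) := by rw [h4]; exact hBub
    exact_mod_cast this
  -- conclude
  have hdecomp : h = B + (h - B) := (Nat.add_sub_cancel' hBle).symm
  have hr : h - B < 2^(3*k+2) := by omega
  have hdiv : h / 2^(3*k+2) = 2*M + x k := by
    conv_lhs => rw [hdecomp, hB]
    rw [Nat.add_comm, Nat.add_mul_div_right _ _ (by positivity), ← hB, Nat.div_eq_of_lt hr,
      Nat.zero_add]
  rw [hdiv, Nat.mul_add_mod]
  exact Nat.mod_eq_of_lt (by have := hx k; omega)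

/-- If `H` is binomial with `64^k` trials and success probability
`p = 0.x₁01x₂01x₃01⋯` (in binary), then the `(3k+3)`-th binary digit of `H`,
i.e. `⌊H/2^(3k+2)⌋ mod 2`, equals `x_k` with probability at least `3/4`. -/
theorem stmt_10 (x : ℕ → ℕ) (hx : ∀ i, x i ≤ 1) (p : ℝ)
    (hp : p = ∑' i : ℕ, ((x (i + 1) : ℝ) * 2 ^ (-(3 * (i : ℤ) + 1))
      + 2 ^ (-(3 * (i : ℤ) + 3))))
    (hp1 : ENNReal.ofReal p ≤ 1) (k : ℕ) (hk : 1 ≤ k) :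
    3 / 4 ≤ (PMF.binomial (Real.toNNReal p) (ENNReal.coe_le_one_iff.mp hp1) (64 ^ k)).toMeasure
      {h : Fin (64 ^ k + 1) | (h : ℕ) / 2 ^ (3 * k + 2) % 2 = x k} := by
  have hp0 : 0 ≤ p := by
    rw [hp]
    apply tsum_nonneg
    intro i
    positivity
  have hple1 : p ≤ 1 := ENNReal.ofReal_le_one.mp hp1
  set n : ℕ := 64^k with hn
  set pmf := PMF.binomial (Real.toNNReal p) (ENNReal.coe_le_one_iff.mp hp1) n with hpmf
  set S : Set (Fin (n+1)) := {h : Fin (n+1) | (h : ℕ) / 2^(3*k+2) % 2 = x k} with hS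
  have hmeasS : MeasurableSet S := MeasurableSet.of_discrete
  have hmeasSc : MeasurableSet Sᶜ := hmeasS.compl
  -- pointwise formula
  have hq0 : (0:ℝ) ≤ 1 - p := by linarith
  have hpt : ∀ h : Fin (n+1), pmf h
      = ENNReal.ofReal ((n.choose (h:ℕ) : ℝ) * p^(h:ℕ) * (1-p)^(n-(h:ℕ))) := by
    intro h
    rw [hpmf, PMF.binomial_apply]
    push_cast
    rw [show ((Real.toNNReal p : NNReal) : ℝ≥0∞) = ENNReal.ofReal p from rfl]
    rw [ENNReal.ofReal_mul (by positivity), ENNReal.ofReal_mul (by positivity)]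
    rw [ENNReal.ofReal_pow hp0, ENNReal.ofReal_pow hq0, ENNReal.ofReal_natCast]
    have : (1 : ℝ≥0∞) - ENNReal.ofReal p = ENNReal.ofReal (1-p) := by
      rw [ENNReal.ofReal_sub _ hp0, ENNReal.ofReal_one]
    rw [this]
    ring
  -- measure of complement
  have hSc : pmf.toMeasure Sᶜ ≤ ENNReal.ofReal (1/4) := by
    classical
    rw [PMF.toMeasure_apply_fintype]
    have e1 : ∀ h : Fin (n+1), Sᶜ.indicator pmf h
        = ENNReal.ofReal (if ¬ ((h:ℕ) / 2^(3*k+2) % 2 = x k)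
            then (n.choose (h:ℕ) : ℝ) * p^(h:ℕ) * (1-p)^(n-(h:ℕ)) else 0) := by
      intro h
      by_cases hh : (h:ℕ) / 2^(3*k+2) % 2 = x k
      · rw [Set.indicator_of_notMem (by simp [hS, hh]), if_neg (by simpa using hh)]
        simp
      · rw [Set.indicator_of_mem (by simp [hS, hh]), if_pos hh, hpt]
    rw [Finset.sum_congr rfl (fun h _ => e1 h), ← ENNReal.ofReal_sum_of_nonneg
      (fun h _ => by split <;> positivity)]
    apply ENNReal.ofReal_le_ofReal
    -- convert Fin-sum to range-sum
    have e2 : ∑ h : Fin (n+1), (if ¬ ((h:ℕ) / 2^(3*k+2) % 2 = x k)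
          then (n.choose (h:ℕ) : ℝ) * p^(h:ℕ) * (1-p)^(n-(h:ℕ)) else 0)
        = ∑ h ∈ (range (n+1)).filter (fun h => ¬ (h / 2^(3*k+2) % 2 = x k)),
          (n.choose h : ℝ) * p^h * (1-p)^(n-h) := by
      rw [Finset.sum_filter, ← Fin.sum_univ_eq_sum_range]
    rw [e2, hn]
    exact cheb p hp0 hple1 k _ (NT x hx p hp k hk)
  -- conclude
  have hprob : pmf.toMeasure S + pmf.toMeasure Sᶜ = 1 := by
    rw [measure_add_measure_compl hmeasS, measure_univ]
  have hquarter : ENNReal.ofReal (1/4) = (1/4 : ℝ≥0∞) := by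
    rw [ENNReal.ofReal_div_of_pos (by norm_num)]
    norm_num
  rw [hquarter] at hSc
  have hsum : (3/4 : ℝ≥0∞) + 1/4 = 1 := by
    rw [ENNReal.div_add_div_same]
    norm_num
    exact ENNReal.div_self (by norm_num) (by norm_num)
  have key : (3/4 : ℝ≥0∞) + 1/4 ≤ pmf.toMeasure S + 1/4 :=
    calc (3/4 : ℝ≥0∞) + 1/4 = 1 := hsum
      _ = pmf.toMeasure S + pmf.toMeasure Sᶜ := hprob.symm
      _ ≤ pmf.toMeasure S + 1/4 := add_le_add_right hSc _
  exact (ENNReal.add_le_add_iff_right (by norm_num)).mp key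
end
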